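/- Let K be a number field and 𝔭 a finite prime of K. If the question of finiteness of the subvarieties W(p) (Mazur's non-archimedean question) has a positive answer for K and S = {𝔭}, then there does not exist a subset of K that is simultaneously infinite, 𝔭-adically discrete, and Diophantine over K. -/

import Mathlib

open NumberField IsDedekindDomain

/-- A subset `A ⊆ K^k` is Diophantine over a field `K` if it is the projection of the zero
set of a polynomial with coefficients in `K`. -/
def DiophSet {K : Type*} [Field K] {k : ℕ} (A : Set (Fin k → K)) : Prop :=
  ∃ (n : ℕ) (f : MvPolynomial (Fin k ⊕ Fin n) K),
    ∀ t : Fin k → K, t ∈ A ↔ ∃ x : Fin n → K, MvPolynomial.eval (Sum.elim t x) f = 0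

set_option maxHeartbeats 1000000 in
/-- Mazur's non-archimedean question for `K` and `S = {𝔭}`:  for every affine variety `V`
over `K` (cut out by a set `S` of polynomials), and every point `p` of `V(K_𝔭)`, let `W(p)`
be the set of `K_𝔭`-points of the intersection over all open neighbourhoods `U` of `p` of
the Zariski closures of `V(K) ∩ U`.  If for every such `V` only finitely many distinct sets
`W(p)` arise, then there is no subset of `K` that is simultaneously infinite,
`𝔭`-adically discrete, and Diophantine over `K`. -/
theorem stmt_3 (K : Type*) [Field K] [NumberField K] (v : HeightOneSpectrum (𝓞 K))
    (hMazur : ∀ (n : ℕ) (S : Set (MvPolynomial (Fin n) K)),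
      Set.Finite ((fun pt : Fin n → v.adicCompletion K =>
          ⋂ U ∈ {U : Set (Fin n → v.adicCompletion K) | IsOpen U ∧ pt ∈ U},
            {y : Fin n → v.adicCompletion K | ∀ f : MvPolynomial (Fin n) K,
              (∀ z : Fin n → K, (∀ g ∈ S, MvPolynomial.eval z g = 0) →
                (fun i => algebraMap K (v.adicCompletion K) (z i)) ∈ U →
                MvPolynomial.eval z f = 0) →
              MvPolynomial.aeval y f = 0}) ''
        {y : Fin n → v.adicCompletion K | ∀ f ∈ S, MvPolynomial.aeval y f = 0})) :
    ¬ ∃ A : Set K, A.Infinite ∧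
      (∀ x ∈ A, ∃ U : Set (v.adicCompletion K), IsOpen U ∧
        algebraMap K (v.adicCompletion K) x ∈ U ∧
        ∀ y ∈ A, algebraMap K (v.adicCompletion K) y ∈ U → y = x) ∧
      DiophSet {t : Fin 1 → K | t 0 ∈ A} := by
  rintro ⟨A, hInf, hDisc, n, f, hf⟩
  classical
  set L := v.adicCompletion K with hLdef
  set ι : K →+* L := algebraMap K L with hιdef
  have hι : Function.Injective ι := ι.injective
  set e : Fin 1 ⊕ Fin n ≃ Fin (1 + n) := finSumFinEquiv with hedef
  set F : MvPolynomial (Fin (1 + n)) K := MvPolynomial.rename e f with hFdef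
  -- witnesses for membership in A
  have hw : ∀ a : A, ∃ x : Fin n → K,
      MvPolynomial.eval (Sum.elim (fun _ : Fin 1 => (a : K)) x) f = 0 :=
    fun a => (hf _).1 a.2
  choose w hwz using hw
  set z : A → Fin (1 + n) → K :=
    fun a => Sum.elim (fun _ : Fin 1 => (a : K)) (w a) ∘ e.symm with hzdef
  set p : A → Fin (1 + n) → L := fun a i => ι (z a i) with hpdef
  set i₀ : Fin (1 + n) := e (Sum.inl 0) with hi₀def
  have hz₀ : ∀ a : A, z a i₀ = a := by
    intro a; simp [hzdef, hi₀def]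
  have haev : ∀ (y : Fin (1 + n) → K) (q : MvPolynomial (Fin (1 + n)) K),
      MvPolynomial.aeval (fun i => ι (y i)) q = ι (MvPolynomial.eval y q) := by
    intro y q
    rw [MvPolynomial.aeval_def, ← MvPolynomial.eval₂_id (p := q),
      MvPolynomial.eval₂_comp_left]
    simp [Function.comp_def, hιdef]
  have hrename : ∀ y : Fin (1 + n) → K,
      MvPolynomial.eval y F = MvPolynomial.eval (y ∘ e) f := by
    intro y; simp [hFdef, MvPolynomial.eval_rename]
  have hevalz : ∀ a : A, MvPolynomial.eval (z a) F = 0 := by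
    intro a
    rw [hrename]
    have hcomp : (z a) ∘ e = Sum.elim (fun _ : Fin 1 => (a : K)) (w a) := by
      funext s
      simp [hzdef, Function.comp]
    rw [hcomp]
    exact hwz a
  -- the variety and the map W
  set Vset : Set (Fin (1 + n) → L) :=
    {y | ∀ g ∈ ({F} : Set (MvPolynomial (Fin (1 + n)) K)), MvPolynomial.aeval y g = 0}
    with hVdef
  set Φ : (Fin (1 + n) → L) → Set (Fin (1 + n) → L) := fun pt =>
    ⋂ U ∈ {U : Set (Fin (1 + n) → L) | IsOpen U ∧ pt ∈ U},
      {y : Fin (1 + n) → L | ∀ q : MvPolynomial (Fin (1 + n)) K,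
        (∀ zz : Fin (1 + n) → K,
            (∀ g ∈ ({F} : Set (MvPolynomial (Fin (1 + n)) K)),
              MvPolynomial.eval zz g = 0) →
            (fun i => algebraMap K L (zz i)) ∈ U → MvPolynomial.eval zz q = 0) →
        MvPolynomial.aeval y q = 0} with hΦdef
  have hfin : (Φ '' Vset).Finite := hMazur (1 + n) {F}
  have hmemV : ∀ a : A, p a ∈ Vset := by
    intro a g hg
    rcases hg with rfl
    show MvPolynomial.aeval (fun i => ι (z a i)) F = 0
    rw [haev, hevalz, map_zero]
  have h1 : ∀ a : A, p a ∈ Φ (p a) := by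
    intro a
    rw [hΦdef]
    refine Set.mem_iInter₂.2 fun U hU => ?_
    intro q hq
    have hev : MvPolynomial.eval (z a) q = 0 := by
      refine hq (z a) ?_ hU.2
      rintro g rfl
      exact hevalz a
    show MvPolynomial.aeval (fun i => ι (z a i)) q = 0
    rw [haev, hev, map_zero]
  have h2 : ∀ a : A, ∀ y ∈ Φ (p a), y i₀ = ι a := by
    intro a y hy
    obtain ⟨U₀, hU₀open, hU₀mem, hU₀sep⟩ := hDisc a a.2
    set U : Set (Fin (1 + n) → L) := (fun y : Fin (1 + n) → L => y i₀) ⁻¹' U₀ with hUdef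
    have hUopen : IsOpen U := hU₀open.preimage (continuous_apply i₀)
    have hpU : p a ∈ U := by
      show p a i₀ ∈ U₀
      have : p a i₀ = ι (z a i₀) := rfl
      rw [this, hz₀]
      exact hU₀mem
    rw [hΦdef] at hy
    have hy' := Set.mem_iInter₂.1 hy U ⟨hUopen, hpU⟩
    have hq : ∀ zz : Fin (1 + n) → K,
        (∀ g ∈ ({F} : Set (MvPolynomial (Fin (1 + n)) K)),
          MvPolynomial.eval zz g = 0) →
        (fun i => algebraMap K L (zz i)) ∈ U →
        MvPolynomial.eval zz (MvPolynomial.X i₀ - MvPolynomial.C (a : K)) = 0 := by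
      intro zz hzz hzU
      have hFz : MvPolynomial.eval zz F = 0 := hzz F rfl
      rw [hrename] at hFz
      have hmemA : zz i₀ ∈ A := by
        have hsum : Sum.elim (fun _ : Fin 1 => zz i₀) ((zz ∘ e) ∘ Sum.inr) = zz ∘ e := by
          funext s
          cases s with
          | inl j =>
            have : j = 0 := Subsingleton.elim _ _
            subst this
            rfl
          | inr j => rfl
        exact (hf (fun _ => zz i₀)).2 ⟨(zz ∘ e) ∘ Sum.inr, by rw [hsum]; exact hFz⟩
      have hzi : zz i₀ = a := hU₀sep (zz i₀) hmemA hzU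
      simp [hzi]
    have := hy' (MvPolynomial.X i₀ - MvPolynomial.C (a : K)) hq
    simpa [sub_eq_zero] using this
  -- contradiction with finiteness
  have : Infinite A := hInf.to_subtype
  have hinf2 : (Φ '' Vset).Infinite := by
    apply Set.infinite_of_injective_forall_mem (f := fun a : A => Φ (p a))
    · intro a b hab
      have hab' : Φ (p a) = Φ (p b) := hab
      have hb : p b ∈ Φ (p a) := by rw [hab']; exact h1 b
      have hba := h2 a (p b) hb
      have : ι (b : K) = ι (a : K) := by
        have : p b i₀ = ι (z b i₀) := rfl
        rw [this, hz₀] at hba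
        exact hba
      exact Subtype.ext (hι this).symm
    · exact fun a => ⟨p a, hmemV a, rfl⟩
  exact hinf2 hfin
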